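/- Let a₁,…,aₙ be positive integers with gcd(a₁,…,aₙ) = 1 such that the diagonal quadratic form a₁y₁²+⋯+aₙyₙ² represents every positive integer over ℤ_p for every prime p (i.e., is locally universal). Then for every integer m ≥ 3 and every positive integer N and every prime p, the equation a₁P_m(x₁)+⋯+aₙP_m(xₙ) = N has a solution in ℤ_pⁿ; that is, the m-gonal form ⟨a₁,…,aₙ⟩_m is locally universal for all m ≥ 3. -/

import Mathlib

/-- Hensel's lemma for an integer quadratic polynomial. -/
lemma quadHensel (p : ℕ) [Fact p.Prime] (A B C x₀ : ℤ)
    (h : ‖((A*x₀^2 + B*x₀ + C : ℤ) : ℤ_[p])‖ < ‖((2*A*x₀ + B : ℤ) : ℤ_[p])‖^2) :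
    ∃ x : ℤ_[p], (A:ℤ_[p])*x^2 + (B:ℤ_[p])*x + (C:ℤ_[p]) = 0 := by
  set F : Polynomial ℤ_[p] := Polynomial.C (A:ℤ_[p]) * Polynomial.X^2 +
    Polynomial.C (B:ℤ_[p]) * Polynomial.X + Polynomial.C (C:ℤ_[p]) with hF
  have heval : ∀ z : ℤ_[p], F.eval z = (A:ℤ_[p])*z^2 + (B:ℤ_[p])*z + (C:ℤ_[p]) := by
    intro z; simp [hF]
  have hderiv : ∀ z : ℤ_[p], F.derivative.eval z = (2*A:ℤ_[p])*z + (B:ℤ_[p]) := by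
    intro z; simp [hF]; ring
  have h' : ‖F.eval ((x₀:ℤ):ℤ_[p])‖ < ‖F.derivative.eval ((x₀:ℤ):ℤ_[p])‖^2 := by
    rw [heval, hderiv]
    convert h using 3 <;> push_cast <;> ring
  obtain ⟨z, hz, -⟩ := hensels_lemma h'
  exact ⟨z, by rw [Polynomial.coe_aeval_eq_eval, heval] at hz; exact hz⟩

/-- An integer not divisible by `p` is a unit in `ℤ_[p]`. -/
lemma intUnit (p : ℕ) [Fact p.Prime] (k : ℤ) (h : ¬ (p:ℤ) ∣ k) : IsUnit ((k:ℤ):ℤ_[p]) := by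
  rw [PadicInt.isUnit_iff]
  refine le_antisymm (PadicInt.norm_le_one _) ?_
  by_contra hlt
  push_neg at hlt
  exact h ((PadicInt.norm_int_lt_one_iff_dvd k).mp hlt)

/-- if the diagonal quadratic form `Σ aᵢyᵢ²` (with `gcd(a₁,…,aₙ) = 1`) represents
every positive integer over `ℤ_p` for every prime `p`, then for every `m ≥ 3` the `m`-gonal form
`⟨a₁,…,aₙ⟩ₘ` is locally universal, i.e. `Σ aᵢP_m(xᵢ) = N` is solvable over `ℤ_p` for every
positive integer `N` and every prime `p`.  The `m`-gonal equation is stated multiplied by `2`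
(an equivalent formulation, since `2` is a nonzerodivisor in `ℤ_p`). -/
theorem stmt13 (n : ℕ) (a : Fin n → ℤ) (ha : ∀ i, 0 < a i)
    (hprim : Finset.univ.gcd a = 1)
    (hloc : ∀ (p : ℕ) [Fact p.Prime], ∀ N : ℤ, 0 < N →
      ∃ y : Fin n → ℤ_[p], ∑ i, (a i : ℤ_[p]) * (y i) ^ 2 = (N : ℤ_[p])) :
    ∀ m : ℤ, 3 ≤ m → ∀ N : ℤ, 0 < N → ∀ (p : ℕ) [Fact p.Prime],
      ∃ x : Fin n → ℤ_[p],
        ∑ i, (a i : ℤ_[p]) * (((m : ℤ_[p]) - 2) * ((x i) ^ 2 - x i) + 2 * x i)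
          = 2 * (N : ℤ_[p]) := by
  intro m hm N hN p hp
  set t : ℤ := m - 2 with htdef
  have ht1 : 1 ≤ t := by omega
  have hmt : ((m : ℤ_[p]) - 2) = ((t : ℤ) : ℤ_[p]) := by push_cast [htdef]; ring
  set S : ℤ := ∑ i, a i with hSdef
  have hS0 : 0 ≤ S := Finset.sum_nonneg fun i _ => (ha i).le
  have hScast : ((S : ℤ) : ℤ_[p]) = ∑ i, ((a i : ℤ) : ℤ_[p]) := by
    rw [hSdef]; push_cast; rfl
  by_cases hpt : (p : ℤ) ∣ 2 * t
  · -- p ∣ 2t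
    obtain ⟨i₀, hai⟩ : ∃ i, ¬ (p:ℤ) ∣ a i := by
      by_contra hc; push_neg at hc
      have h1 : (p:ℤ) ∣ 1 := hprim ▸ Finset.dvd_gcd (fun i _ => hc i)
      have h2 := Int.le_of_dvd one_pos h1
      have h3 := (Fact.out : p.Prime).two_le
      omega
    have hpp : Prime (p:ℤ) := Nat.prime_iff_prime_int.mp (Fact.out : p.Prime)
    -- reduction to a single-variable quadratic equation
    have build : (∃ x : ℤ_[p], ((a i₀ * t : ℤ):ℤ_[p])*x^2 + ((a i₀ * (2 - t) : ℤ):ℤ_[p])*x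
          + ((-(2*N) : ℤ):ℤ_[p]) = 0) →
        ∃ x : Fin n → ℤ_[p],
          ∑ i, (a i : ℤ_[p]) * (((m : ℤ_[p]) - 2) * ((x i) ^ 2 - x i) + 2 * x i)
            = 2 * (N : ℤ_[p]) := by
      rintro ⟨xs, hxs⟩
      refine ⟨fun i => if i = i₀ then xs else 0, ?_⟩
      rw [Finset.sum_eq_single i₀]
      · simp only [if_pos rfl]
        rw [hmt]
        push_cast at hxs ⊢
        linear_combination hxs
      · intro b _ hb; simp [hb]
      · intro h; exact absurd (Finset.mem_univ i₀) h
    rcases eq_or_ne p 2 with hp2 | hp2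
    · -- p = 2
      subst hp2
      have hai2 : ¬ (2:ℤ) ∣ a i₀ := hai
      rcases Int.even_or_odd t with hte | hto
      · -- t even
        obtain ⟨s, hs⟩ := hte
        have hts : t = 2*s := by omega
        rcases Int.even_or_odd s with hse | hso
        · -- 4 ∣ t : Hensel with modulus 8
          obtain ⟨w, hw⟩ := hse
          have ht4 : t = 4*w := by omega
          -- choose x₀ with 4 ∣ a i₀ * x₀ - N
          have hcop : IsCoprime ((2:ℤ)^2) (a i₀) :=
            ((Int.prime_two.coprime_iff_not_dvd).mpr hai2).pow_left
          obtain ⟨u, v, huv⟩ := hcop.symm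
          set x₀ : ℤ := u * N with hx₀
          have hax : (4:ℤ) ∣ a i₀ * x₀ - N := by
            refine ⟨-(v*N), ?_⟩
            rw [hx₀]
            linear_combination N * huv
          obtain ⟨l, hl⟩ := hax
          have hx2 : (2:ℤ) ∣ x₀^2 - x₀ := by
            rcases Int.even_or_odd x₀ with ⟨c, hc⟩ | ⟨c, hc⟩
            · exact ⟨2*c^2 - c, by rw [hc]; ring⟩
            · exact ⟨2*c^2 + c, by rw [hc]; ring⟩
          obtain ⟨c, hc⟩ := hx2
          apply build
          apply quadHensel 2 (a i₀ * t) (a i₀ * (2 - t)) (-(2*N)) x₀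
          have heval8 : ((2:ℤ)^3) ∣ (a i₀ * t)*x₀^2 + (a i₀ * (2 - t))*x₀ + (-(2*N)) := by
            refine ⟨w * (a i₀) * c + l, ?_⟩
            have : (a i₀ * t)*x₀^2 + (a i₀ * (2 - t))*x₀ + (-(2*N))
                = t * (a i₀ * (x₀^2 - x₀)) + 2*(a i₀ * x₀ - N) := by ring
            rw [this, ht4, hc, hl]; ring
          have h1 := (PadicInt.norm_int_le_pow_iff_dvd
            (p := 2) (k := (a i₀ * t)*x₀^2 + (a i₀ * (2 - t))*x₀ + (-(2*N))) (n := 3)).mpr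
            (by exact_mod_cast heval8)
          have hKodd : ¬ (2:ℤ) ∣ (a i₀ * (t*x₀ + 1 - s)) := by
            intro hdvd
            rcases Int.prime_two.dvd_mul.mp hdvd with h | h
            · exact hai2 h
            · obtain ⟨K, hK⟩ : ∃ K, t*x₀ + 1 - s = 2*K + 1 :=
                ⟨2*(w*x₀) - w, by rw [ht4, hw]; ring⟩
              rw [hK] at h
              omega
          have h2 : ‖((2*(a i₀ * t)*x₀ + a i₀ * (2 - t) : ℤ) : ℤ_[2])‖ = (2:ℝ)⁻¹ := by
            have : (2*(a i₀ * t)*x₀ + a i₀ * (2 - t) : ℤ)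
                = 2 * (a i₀ * (t*x₀ + 1 - s)) := by rw [hts]; ring
            rw [this]
            push_cast
            rw [norm_mul]
            have hn2 : ‖(2 : ℤ_[2])‖ = (2:ℝ)⁻¹ := by
              have := @PadicInt.norm_p 2 _
              simpa using this
            have hnK : ‖((a i₀ * (t*x₀ + 1 - s) : ℤ) : ℤ_[2])‖ = 1 := by
              refine le_antisymm (PadicInt.norm_le_one _) ?_
              by_contra hlt; push_neg at hlt
              exact hKodd ((PadicInt.norm_int_lt_one_iff_dvd _).mp hlt)
            push_cast at hnK
            rw [hn2, hnK, mul_one]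
          rw [h2]
          refine lt_of_le_of_lt h1 ?_
          norm_num
        · -- t ≡ 2 (mod 4) : complete the square with even variables
          obtain ⟨k, hk⟩ := hso
          set r : ℤ := -k with hr
          have hsr : s = 1 - 2*r := by omega
          have hs1 : 1 ≤ s := by omega
          have hM' : 0 < s*N + S*r^2 := by
            nlinarith [mul_nonneg hS0 (sq_nonneg r)]
          obtain ⟨z, hz⟩ := hloc 2 (s*N + S*r^2) hM'
          have hsodd : ¬ ((2:ℕ):ℤ) ∣ s := by push_cast; omega
          obtain ⟨w, hw⟩ := (intUnit 2 s hsodd).exists_right_inv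
          refine ⟨fun i => w * (z i - ((r:ℤ) : ℤ_[2])), ?_⟩
          have hzx : ∀ i, ((s:ℤ):ℤ_[2]) * (w * (z i - ((r:ℤ) : ℤ_[2])))
              = z i - ((r:ℤ) : ℤ_[2]) := by
            intro i; rw [← mul_assoc, hw, one_mul]
          have hz' : ∀ i, z i = ((s:ℤ):ℤ_[2]) * (w * (z i - ((r:ℤ) : ℤ_[2]))) + ((r:ℤ) : ℤ_[2]) := by
            intro i; rw [hzx i]; ring
          have hsne : (((s:ℤ)) : ℤ_[2]) ≠ 0 := by
            exact_mod_cast (by omega : (s:ℤ) ≠ 0)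
          apply mul_left_cancel₀ hsne
          have hm2s : ((m : ℤ_[2]) - 2) = 2 * ((s:ℤ) : ℤ_[2]) := by
            rw [hmt, hts]; push_cast; ring
          have hsrc : ((s:ℤ) : ℤ_[2]) = 1 - 2*((r:ℤ) : ℤ_[2]) := by
            exact_mod_cast congrArg (fun q : ℤ => ((q:ℤ) : ℤ_[2])) hsr
          have hterm : ∀ i ∈ Finset.univ, ((s:ℤ) : ℤ_[2]) *
              ((a i : ℤ_[2]) * (((m : ℤ_[2]) - 2) * ((w * (z i - ((r:ℤ) : ℤ_[2])))^2
                - w * (z i - ((r:ℤ) : ℤ_[2]))) + 2 * (w * (z i - ((r:ℤ) : ℤ_[2])))))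
              = 2 * ((a i : ℤ_[2]) * (z i)^2) - 2 * ((a i : ℤ_[2]) * ((r:ℤ) : ℤ_[2])^2) := by
            intro i _
            rw [hm2s]
            set X : ℤ_[2] := w * (z i - ((r:ℤ) : ℤ_[2])) with hX
            rw [hz' i, ← hX]
            linear_combination (-2*(a i : ℤ_[2])*((s:ℤ) : ℤ_[2])*X) * hsrc
          calc ((s:ℤ) : ℤ_[2]) * ∑ i, (a i : ℤ_[2]) *
                (((m : ℤ_[2]) - 2) * ((w * (z i - ((r:ℤ) : ℤ_[2])))^2
                  - w * (z i - ((r:ℤ) : ℤ_[2]))) + 2 * (w * (z i - ((r:ℤ) : ℤ_[2]))))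
              = ∑ i, (2 * ((a i : ℤ_[2]) * (z i)^2) - 2 * ((a i : ℤ_[2]) * ((r:ℤ) : ℤ_[2])^2)) := by
                rw [Finset.mul_sum]; exact Finset.sum_congr rfl hterm
            _ = 2 * (((s*N + S*r^2 : ℤ)) : ℤ_[2]) - 2 * (((S:ℤ):ℤ_[2]) * ((r:ℤ) : ℤ_[2])^2) := by
                rw [Finset.sum_sub_distrib, ← Finset.mul_sum, hz, hScast, ← Finset.mul_sum,
                  ← Finset.sum_mul]
            _ = ((s:ℤ) : ℤ_[2]) * (2 * (N : ℤ_[2])) := by push_cast; ring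
      · -- t odd : Hensel at x₀ = 0
        apply build
        apply quadHensel 2 (a i₀ * t) (a i₀ * (2 - t)) (-(2*N)) 0
        have h1 : ‖(((a i₀ * t)*0^2 + (a i₀ * (2-t))*0 + (-(2*N)) : ℤ) : ℤ_[2])‖ < 1 := by
          rw [PadicInt.norm_int_lt_one_iff_dvd]
          exact ⟨-N, by push_cast; ring⟩
        have htodd : ¬ (2:ℤ) ∣ t := by
          obtain ⟨c, hc⟩ := hto; omega
        have h2 : ‖((2*(a i₀ * t)*0 + a i₀ * (2-t) : ℤ) : ℤ_[2])‖ = 1 := by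
          refine le_antisymm (PadicInt.norm_le_one _) ?_
          by_contra hlt; push_neg at hlt
          have hd := (PadicInt.norm_int_lt_one_iff_dvd _).mp hlt
          have hd' : (2:ℤ) ∣ a i₀ * (2 - t) := by
            have : (2*(a i₀ * t)*0 + a i₀ * (2-t) : ℤ) = a i₀ * (2 - t) := by ring
            rwa [this] at hd
          rcases Int.prime_two.dvd_mul.mp hd' with h | h
          · exact hai2 h
          · exact htodd (by omega)
        rw [h2, one_pow]; exact h1
    · -- p odd : p ∣ t, Hensel with modulus p
      have hp2' : ¬ (p:ℤ) ∣ 2 := by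
        intro h
        have := Int.le_of_dvd (by norm_num) h
        have h3 := (Fact.out : p.Prime).two_le
        have : p = 2 := by omega
        exact hp2 this
      have hptd : (p:ℤ) ∣ t := by
        rcases hpp.dvd_mul.mp hpt with h | h
        · exact absurd h hp2'
        · exact h
      have hcop : IsCoprime ((p:ℤ)) (a i₀) := (hpp.coprime_iff_not_dvd).mpr hai
      obtain ⟨v, u, huv⟩ := hcop
      set x₀ : ℤ := u * N with hx₀
      have hax : (p:ℤ) ∣ a i₀ * x₀ - N := by
        refine ⟨-(v*N), ?_⟩
        rw [hx₀]
        linear_combination N * huv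
      apply build
      apply quadHensel p (a i₀ * t) (a i₀ * (2 - t)) (-(2*N)) x₀
      obtain ⟨c, hc⟩ := hptd
      obtain ⟨l, hl⟩ := hax
      have h1 : ‖(((a i₀ * t)*x₀^2 + (a i₀ * (2-t))*x₀ + (-(2*N)) : ℤ) : ℤ_[p])‖ < 1 := by
        rw [PadicInt.norm_int_lt_one_iff_dvd]
        refine ⟨c * (a i₀ * (x₀^2 - x₀)) + 2*l, ?_⟩
        have : (a i₀ * t)*x₀^2 + (a i₀ * (2-t))*x₀ + (-(2*N))
            = t * (a i₀ * (x₀^2 - x₀)) + 2*(a i₀ * x₀ - N) := by ring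
        rw [this, hc, hl]; ring
      have h2 : ‖((2*(a i₀ * t)*x₀ + a i₀ * (2-t) : ℤ) : ℤ_[p])‖ = 1 := by
        refine le_antisymm (PadicInt.norm_le_one _) ?_
        by_contra hlt; push_neg at hlt
        have hd := (PadicInt.norm_int_lt_one_iff_dvd _).mp hlt
        have hd2 : (p:ℤ) ∣ 2 * a i₀ := by
          have he : 2 * a i₀ = (2*(a i₀ * t)*x₀ + a i₀ * (2-t)) - t * (2 * a i₀ * x₀ - a i₀) := by
            ring
          rw [he]
          exact hd.sub (Dvd.dvd.mul_right ⟨c, hc⟩ _)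
        rcases hpp.dvd_mul.mp hd2 with h | h
        · exact hp2' h
        · exact hai h
      rw [h2, one_pow]; exact h1
  · -- Case A : p ∤ 2t, complete the square
    have hM : 0 < 8*t*N + S*(t-2)^2 := by
      nlinarith [mul_nonneg hS0 (sq_nonneg (t-2))]
    obtain ⟨y, hy⟩ := hloc p (8*t*N + S*(t-2)^2) hM
    obtain ⟨v, hv⟩ := (intUnit p (2*t) hpt).exists_right_inv
    refine ⟨fun i => v * (y i - ((2 - t : ℤ) : ℤ_[p])), ?_⟩
    have hxy : ∀ i, (((2*t : ℤ) : ℤ_[p])) * (v * (y i - ((2 - t : ℤ) : ℤ_[p])))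
        = y i - ((2 - t : ℤ) : ℤ_[p]) := by
      intro i; rw [← mul_assoc, hv, one_mul]
    have h4t : (((4*t : ℤ)) : ℤ_[p]) ≠ 0 := by
      exact_mod_cast (by omega : (4*t : ℤ) ≠ 0)
    apply mul_left_cancel₀ h4t
    have hterm : ∀ i ∈ Finset.univ, ((4*t : ℤ) : ℤ_[p]) *
        ((a i : ℤ_[p]) * (((m : ℤ_[p]) - 2) * ((v * (y i - ((2 - t : ℤ) : ℤ_[p])))^2
          - v * (y i - ((2 - t : ℤ) : ℤ_[p]))) + 2 * (v * (y i - ((2 - t : ℤ) : ℤ_[p])))))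
        = (a i : ℤ_[p]) * (y i)^2 - (a i : ℤ_[p]) * ((2 - (t : ℤ_[p])))^2 := by
      intro i _
      rw [hmt]
      have h := hxy i
      push_cast at h ⊢
      linear_combination ((a i : ℤ_[p]) * (2*(t : ℤ_[p])*(v * (y i - (2 - (t:ℤ_[p])))) + (2 - (t:ℤ_[p])) + y i)) * h
    calc ((4*t : ℤ) : ℤ_[p]) * ∑ i, (a i : ℤ_[p]) *
          (((m : ℤ_[p]) - 2) * ((v * (y i - ((2 - t : ℤ) : ℤ_[p])))^2
            - v * (y i - ((2 - t : ℤ) : ℤ_[p]))) + 2 * (v * (y i - ((2 - t : ℤ) : ℤ_[p]))))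
        = ∑ i, ((a i : ℤ_[p]) * (y i)^2 - (a i : ℤ_[p]) * ((2 - (t : ℤ_[p])))^2) := by
          rw [Finset.mul_sum]; exact Finset.sum_congr rfl hterm
      _ = ((8*t*N + S*(t-2)^2 : ℤ) : ℤ_[p]) - ((S:ℤ):ℤ_[p]) * ((2 - (t : ℤ_[p])))^2 := by
          rw [Finset.sum_sub_distrib, hy, hScast, ← Finset.sum_mul]
      _ = ((4*t : ℤ) : ℤ_[p]) * (2 * (N : ℤ_[p])) := by push_cast; ring
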